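/- Let λ > 0 and ε ∈ [0,1], and let X be a Poisson random variable with rate λ. Then P(X ≥ (1+ε)·λ) ≤ (e^{ε}/(1+ε)^{1+ε})^{λ} and P(X ≤ λ/(1+ε)) ≤ (((1+ε)/e^{ε})^{1/(1+ε)})^{λ}. -/

import Mathlib

open MeasureTheory ProbabilityTheory Real

lemma aux_hasSum_exp (x : ℝ) : HasSum (fun n : ℕ => x ^ n / n.factorial) (Real.exp x) := by
  rw [Real.exp_eq_exp_ℝ]
  exact NormedSpace.expSeries_div_hasSum_exp x

lemma aux_summable (lam : NNReal) (t : ℝ) :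
    Summable (fun n : ℕ => Real.exp (t * n) * poissonPMFReal lam n) := by
  have h : (fun n : ℕ => Real.exp (t * n) * poissonPMFReal lam n) =
      fun n : ℕ => Real.exp (-lam) * (((lam : ℝ) * Real.exp t) ^ n / n.factorial) := by
    ext n
    rw [poissonPMFReal]
    rw [mul_pow, mul_comm t (n:ℝ), Real.exp_nat_mul]
    ring
  rw [h]
  exact ((aux_hasSum_exp ((lam : ℝ) * Real.exp t)).summable).mul_left _

lemma aux_tsum (lam : NNReal) (t : ℝ) :
    ∑' n : ℕ, Real.exp (t * n) * poissonPMFReal lam n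
      = Real.exp ((lam : ℝ) * (Real.exp t - 1)) := by
  have h : (fun n : ℕ => Real.exp (t * n) * poissonPMFReal lam n) =
      fun n : ℕ => Real.exp (-lam) * (((lam : ℝ) * Real.exp t) ^ n / n.factorial) := by
    ext n
    rw [poissonPMFReal]
    rw [mul_pow, mul_comm t (n:ℝ), Real.exp_nat_mul]
    ring
  rw [h]
  have := ((aux_hasSum_exp ((lam : ℝ) * Real.exp t)).mul_left (Real.exp (-lam))).tsum_eq
  rw [this, ← Real.exp_add]
  ring_nf

lemma aux_integrable (lam : NNReal) (t : ℝ) :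
    Integrable (fun n : ℕ => Real.exp (t * n)) (poissonMeasure lam) := by
  constructor
  · exact (Measurable.aestronglyMeasurable (by measurability))
  · rw [HasFiniteIntegral]
    have hmeas : ∫⁻ n, ‖Real.exp (t * n)‖₊ ∂(poissonMeasure lam)
        = ∑' n : ℕ, (‖Real.exp (t * n)‖₊ : ENNReal) * poissonMeasure lam {n} := by
      exact MeasureTheory.lintegral_countable' _
    simp only [enorm_eq_nnnorm]
    rw [hmeas]
    have hsing : ∀ n : ℕ, poissonMeasure lam {n} = ENNReal.ofReal (poissonPMFReal lam n) := by
      intro n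
      rw [poissonMeasure_singleton]
      rfl
    have : ∀ n : ℕ, (‖Real.exp (t * n)‖₊ : ENNReal) * poissonMeasure lam {n}
        = ENNReal.ofReal (Real.exp (t * n) * poissonPMFReal lam n) := by
      intro n
      rw [hsing n, ENNReal.ofReal_mul (Real.exp_pos _).le]
      congr 1
      rw [← ENNReal.ofReal_coe_nnreal]
      congr 1
      simp [Real.norm_of_nonneg (Real.exp_pos _).le]
    simp_rw [this]
    rw [← ENNReal.ofReal_tsum_of_nonneg
      (fun n => mul_nonneg (Real.exp_pos _).le poissonPMFReal_nonneg) (aux_summable lam t)]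
    exact ENNReal.ofReal_lt_top

lemma aux_integral (lam : NNReal) (t : ℝ) :
    ∫ n, Real.exp (t * n) ∂(poissonMeasure lam)
      = Real.exp ((lam : ℝ) * (Real.exp t - 1)) := by
  rw [integral_poissonMeasure]
  rw [← aux_tsum lam t]
  congr 1
  ext n
  rw [smul_eq_mul, mul_comm, poissonPMFReal]

open MeasureTheory ProbabilityTheory in
/-- Multiplicative Chernoff bounds for a Poisson random variable. -/
theorem stmt_17 (lam : NNReal) (hlam : 0 < lam) (ε : ℝ) (hε0 : 0 ≤ ε) (hε1 : ε ≤ 1)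
    {Ω : Type*} [MeasurableSpace Ω] (P : Measure Ω) [IsProbabilityMeasure P]
    (X : Ω → ℕ) (hX : Measurable X)
    (hd : P.map X = poissonMeasure lam) :
    (P {ω | (1 + ε) * (lam : ℝ) ≤ (X ω : ℝ)}).toReal
        ≤ (Real.exp ε / (1 + ε) ^ (1 + ε)) ^ (lam : ℝ)
      ∧ (P {ω | (X ω : ℝ) ≤ (lam : ℝ) / (1 + ε)}).toReal
        ≤ (((1 + ε) / Real.exp ε) ^ (1 / (1 + ε))) ^ (lam : ℝ) := by
  have h1ε : (0:ℝ) < 1 + ε := by linarith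
  set Y : Ω → ℝ := fun ω => (X ω : ℝ) with hY
  have hint : ∀ t : ℝ, Integrable (fun ω => Real.exp (t * Y ω)) P := by
    intro t
    have hg : AEStronglyMeasurable (fun n : ℕ => Real.exp (t * n)) (P.map X) :=
      (measurable_from_top (f := fun n : ℕ => Real.exp (t * n))).aestronglyMeasurable
    have := (MeasureTheory.integrable_map_measure hg hX.aemeasurable).mp
    rw [hd] at this
    exact this (aux_integrable lam t)
  have hmgf : ∀ t : ℝ, mgf Y P t = Real.exp ((lam : ℝ) * (Real.exp t - 1)) := by
    intro t
    rw [mgf]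
    have hg : AEStronglyMeasurable (fun n : ℕ => Real.exp (t * n)) (P.map X) :=
      (measurable_from_top (f := fun n : ℕ => Real.exp (t * n))).aestronglyMeasurable
    have := MeasureTheory.integral_map hX.aemeasurable hg
    rw [hd, aux_integral lam t] at this
    exact this.symm
  constructor
  · have ht : (0:ℝ) ≤ Real.log (1 + ε) := Real.log_nonneg (by linarith)
    have h := measure_ge_le_exp_mul_mgf (μ := P) (X := Y) ((1 + ε) * (lam : ℝ)) ht
      (hint (Real.log (1 + ε)))
    rw [hmgf, Real.exp_log h1ε] at h
    rw [← Real.exp_add] at h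
    refine h.trans (le_of_eq ?_)
    have hA : ((1 + ε):ℝ) ^ ((1 + ε):ℝ) = Real.exp ((1 + ε) * Real.log (1 + ε)) := by
      rw [Real.rpow_def_of_pos h1ε]; ring_nf
    rw [hA, Real.div_rpow (Real.exp_pos _).le (Real.exp_pos _).le,
      ← Real.exp_mul, ← Real.exp_mul, ← Real.exp_sub]
    congr 1
    ring
  · have ht : Real.log (1 + ε) ≤ 0 → True := fun _ => trivial
    have htneg : -Real.log (1 + ε) ≤ 0 := neg_nonpos.mpr (Real.log_nonneg (by linarith))
    have h := measure_le_le_exp_mul_mgf (μ := P) (X := Y) ((lam : ℝ) / (1 + ε)) htneg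
      (hint (-Real.log (1 + ε)))
    rw [hmgf, Real.exp_neg, Real.exp_log h1ε, ← Real.exp_add] at h
    refine h.trans (le_of_eq ?_)
    have hB : ((1 + ε):ℝ) / Real.exp ε = Real.exp (Real.log (1 + ε) - ε) := by
      rw [Real.exp_sub, Real.exp_log h1ε]
    rw [hB, ← Real.exp_mul, ← Real.exp_mul]
    congr 1
    field_simp
    ring
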